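/- Let α > 0 and θ > 2. The coefficient array β defined by β_{j,0} = 2^{−√j} for every j ∈ ℕ and β_{j,k} = 0 for k ≠ 0 is square-summable and satisfies the condition A^α_θ. -/

import Mathlib

open scoped BigOperators

/-- A coefficient array `β` is square-summable if `Σ_{j,k} β_{j,k}² < ∞`. -/
def SqSummable (β : ℕ → ℕ → ℝ) : Prop :=
  Summable fun j : ℕ => ∑ k ∈ Finset.range (2 ^ j), (β j k) ^ 2

/-- `N(J,j) = min(⌊2^J (j−J+1)^{−θ}⌋, 2^j)`. -/
noncomputable def NJj (θ : ℝ) (J j : ℕ) : ℕ :=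
  min ⌊(2 : ℝ) ^ J * ((j : ℝ) - (J : ℝ) + 1) ^ (-θ)⌋₊ (2 ^ j)

/-- `t_{j,J}(β)`: the minimum over subsets `A` of `{0,…,2^j−1}` of cardinality `N(J,j)`
of `Σ_{k ∉ A} β_{j,k}²`, i.e. the sum of squares of all but the `N(J,j)` largest
`|β_{j,k}|` at level `j`. -/
noncomputable def tTail (β : ℕ → ℕ → ℝ) (θ : ℝ) (J j : ℕ) : ℝ :=
  sInf {x : ℝ | ∃ A : Finset ℕ, A ⊆ Finset.range (2 ^ j) ∧ A.card = NJj θ J j ∧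
    x = ∑ k ∈ Finset.range (2 ^ j) \ A, (β j k) ^ 2}

/-- The condition `A^α_θ`. -/
def CondA (β : ℕ → ℕ → ℝ) (α θ : ℝ) : Prop :=
  ∃ C : ℝ, ∀ J : ℕ,
    (2 : ℝ) ^ (2 * (J : ℝ) * α) *
      ∑' j : ℕ, (if J ≤ j then tTail β θ J j else 0) ≤ C

/- ### Auxiliary lemmas -/

theorem aux_sq_div_four_le_exp (x : ℝ) (hx : 0 ≤ x) : x^2/4 ≤ Real.exp x := by
  have h := Real.add_one_le_exp (x/2)
  have h2 : (x/2+1)^2 ≤ (Real.exp (x/2))^2 :=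
    pow_le_pow_left₀ (by positivity) h 2
  have h3 : Real.exp x = Real.exp (x/2) ^ 2 := by
    rw [← Real.exp_nat_mul]; push_cast; ring_nf
  nlinarith

theorem aux_pow4_le_exp (x : ℝ) (hx : 0 ≤ x) : x^4/256 ≤ Real.exp x := by
  have h := aux_sq_div_four_le_exp (x/2) (by positivity)
  have h2 : ((x/2)^2/4)^2 ≤ (Real.exp (x/2))^2 :=
    pow_le_pow_left₀ (by positivity) h 2
  have h3 : Real.exp x = Real.exp (x/2) ^ 2 := by
    rw [← Real.exp_nat_mul]; push_cast; ring_nf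
  nlinarith

theorem aux_base_le (j : ℕ) :
    (2:ℝ)^(-Real.sqrt j) ≤ 1024/(Real.log 2)^4 * (1/((j:ℝ)+1)^2) := by
  have hl2 : (0:ℝ) < Real.log 2 := Real.log_pos one_lt_two
  have hl2' : Real.log 2 ≤ 1 := by nlinarith [Real.log_two_lt_d9]
  rcases Nat.eq_zero_or_pos j with h0 | h1
  · subst h0
    simp only [Nat.cast_zero, Real.sqrt_zero, neg_zero, Real.rpow_zero]
    rw [div_mul_eq_mul_div, le_div_iff₀ (by positivity)]
    nlinarith [pow_le_one₀ (le_of_lt hl2) hl2' (n := 4)]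
  · have hj : (1:ℝ) ≤ (j:ℝ) := by exact_mod_cast h1
    have key : (j:ℝ)^2 * (Real.log 2)^4 / 256 ≤ (2:ℝ)^(Real.sqrt j) := by
      have h := aux_pow4_le_exp (Real.sqrt j * Real.log 2) (by positivity)
      rw [Real.rpow_def_of_pos (by norm_num), mul_comm (Real.log 2)]
      calc (j:ℝ)^2 * (Real.log 2)^4 / 256 = (Real.sqrt j * Real.log 2)^4/256 := by
            rw [mul_pow]
            have h2 : Real.sqrt j ^ 4 = ((Real.sqrt j)^2)^2 := by ring
            rw [h2, Real.sq_sqrt (by positivity)]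
        _ ≤ _ := h
    have hpos : (0:ℝ) < (2:ℝ)^(Real.sqrt j) := by positivity
    have step1 : (2:ℝ)^(-Real.sqrt j) ≤ 256 / ((j:ℝ)^2 * (Real.log 2)^4) := by
      rw [Real.rpow_neg (by norm_num), inv_eq_one_div,
        div_le_div_iff₀ hpos (by positivity)]
      nlinarith
    refine step1.trans ?_
    rw [div_le_iff₀ (by positivity)]
    have hl4 : (0:ℝ) < Real.log 2 ^ 4 := by positivity
    have hj1 : (0:ℝ) < ((j:ℝ)+1)^2 := by positivity
    have heq : 1024 / Real.log 2 ^4 * (1/((j:ℝ)+1)^2) * ((j:ℝ)^2 * Real.log 2^4)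
        = 1024 * (j:ℝ)^2 / ((j:ℝ)+1)^2 := by
      field_simp
    rw [heq, le_div_iff₀ hj1]
    nlinarith [sq_nonneg ((j:ℝ)-1)]

theorem aux_summable_base : Summable (fun j : ℕ => (2:ℝ)^(-Real.sqrt j)) := by
  have h2 : Summable (fun n : ℕ => 1 / ((n:ℝ)) ^ 2) :=
    Real.summable_one_div_nat_pow.mpr one_lt_two
  have h3 : Summable (fun n : ℕ => 1 / ((n:ℝ)+1) ^ 2) := by
    have h := h2.comp_injective (add_left_injective 1)
    apply h.congr
    intro n
    simp [Function.comp]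
  exact Summable.of_nonneg_of_le (fun j => by positivity) aux_base_le (h3.mul_left _)

theorem aux_tTail_of_pos {β : ℕ → ℕ → ℝ} {θ : ℝ}
    (hβdef : ∀ j k : ℕ, β j k = if k = 0 then (2 : ℝ) ^ (-Real.sqrt j) else 0)
    (J j : ℕ) (h : 1 ≤ NJj θ J j) : tTail β θ J j = 0 := by
  have hN : NJj θ J j ≤ 2 ^ j := min_le_right _ _
  have hmem : (0:ℝ) ∈ {x : ℝ | ∃ A : Finset ℕ, A ⊆ Finset.range (2 ^ j) ∧
      A.card = NJj θ J j ∧ x = ∑ k ∈ Finset.range (2 ^ j) \ A, (β j k) ^ 2} := by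
    refine ⟨Finset.range (NJj θ J j), Finset.range_subset_range.mpr hN, Finset.card_range _, ?_⟩
    symm
    apply Finset.sum_eq_zero
    intro k hk
    rw [Finset.mem_sdiff, Finset.mem_range, Finset.mem_range] at hk
    have hk0 : k ≠ 0 := by
      intro h0; exact hk.2 (h0 ▸ h)
    rw [hβdef j k, if_neg hk0]; ring
  apply le_antisymm
  · exact csInf_le ⟨0, fun x ⟨A, _, _, hx⟩ => hx ▸ Finset.sum_nonneg fun k _ => sq_nonneg _⟩ hmem
  · exact le_csInf ⟨0, hmem⟩ fun x ⟨A, _, _, hx⟩ => hx ▸ Finset.sum_nonneg fun k _ => sq_nonneg _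

theorem aux_tTail_of_zero {β : ℕ → ℕ → ℝ} {θ : ℝ}
    (hβdef : ∀ j k : ℕ, β j k = if k = 0 then (2 : ℝ) ^ (-Real.sqrt j) else 0)
    (J j : ℕ) (h : NJj θ J j = 0) :
    tTail β θ J j = ((2:ℝ)^(-Real.sqrt j))^2 := by
  have hset : {x : ℝ | ∃ A : Finset ℕ, A ⊆ Finset.range (2 ^ j) ∧ A.card = NJj θ J j ∧
      x = ∑ k ∈ Finset.range (2 ^ j) \ A, (β j k) ^ 2} = {((2:ℝ)^(-Real.sqrt j))^2} := by
    ext x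
    simp only [Set.mem_setOf_eq, Set.mem_singleton_iff]
    constructor
    · rintro ⟨A, hsub, hcard, hx⟩
      rw [h, Finset.card_eq_zero] at hcard
      subst hcard
      rw [Finset.sdiff_empty] at hx
      rw [hx]
      rw [Finset.sum_eq_single_of_mem 0
        (Finset.mem_range.mpr (Nat.two_pow_pos j))]
      · rw [hβdef j 0, if_pos rfl]
      · intro k _ hk0
        rw [hβdef j k, if_neg hk0]; ring
    · intro hx
      refine ⟨∅, Finset.empty_subset _, by simp [h], ?_⟩
      rw [Finset.sdiff_empty, hx]
      rw [Finset.sum_eq_single_of_mem 0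
        (Finset.mem_range.mpr (Nat.two_pow_pos j))]
      · rw [hβdef j 0, if_pos rfl]
      · intro k _ hk0
        rw [hβdef j k, if_neg hk0]; ring
  rw [tTail, hset, csInf_singleton]

theorem aux_lemE {θ : ℝ} (hθ : 2 < θ) (J j : ℕ) (hJj : J ≤ j) (h : NJj θ J j = 0) :
    (Real.log 2 / (2*θ))^2/4 * (J:ℝ)^2 ≤ Real.sqrt j + 1 := by
  have hθ0 : (0:ℝ) < θ := by linarith
  have hfl : ⌊(2 : ℝ) ^ J * ((j : ℝ) - (J : ℝ) + 1) ^ (-θ)⌋₊ = 0 := by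
    rcases Nat.min_eq_zero_iff.mp h with h' | h'
    · exact h'
    · exact absurd h' (Nat.two_pow_pos j).ne'
  set u : ℝ := (j : ℝ) - (J : ℝ) + 1 with hu
  have hu1 : (1:ℝ) ≤ u := by
    have : (J:ℝ) ≤ (j:ℝ) := by exact_mod_cast hJj
    simp only [hu]; linarith
  have hu0 : (0:ℝ) < u := by linarith
  have hlt : (2 : ℝ) ^ J * u ^ (-θ) < 1 := Nat.floor_eq_zero.mp hfl
  have hinv : u ^ (-θ) = (u ^ θ)⁻¹ := Real.rpow_neg (le_of_lt hu0) θ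
  have huθ : (0:ℝ) < u ^ θ := Real.rpow_pos_of_pos hu0 θ
  have h2J : (2:ℝ) ^ J < u ^ θ := by
    rw [hinv, mul_inv_lt_iff₀ huθ, one_mul] at hlt
    linarith
  have hkey : (2:ℝ) ^ ((J:ℝ)/θ) < u := by
    have h1 : ((2:ℝ) ^ J) ^ (1/θ) < (u ^ θ) ^ (1/θ) :=
      Real.rpow_lt_rpow (by positivity) h2J (by positivity)
    have h2 : ((2:ℝ) ^ J) ^ (1/θ) = (2:ℝ) ^ ((J:ℝ)/θ) := by
      rw [← Real.rpow_natCast 2 J, ← Real.rpow_mul (by norm_num)]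
      ring_nf
    have h3 : (u ^ θ) ^ (1/θ) = u := by
      rw [← Real.rpow_mul (le_of_lt hu0), mul_one_div, div_self (ne_of_gt hθ0),
        Real.rpow_one]
    rwa [h2, h3] at h1
  have hju : u ≤ (j:ℝ) + 1 := by
    have : (0:ℝ) ≤ (J:ℝ) := Nat.cast_nonneg J
    simp only [hu]; linarith
  have hs : (0:ℝ) ≤ Real.sqrt j := Real.sqrt_nonneg _
  have hsq : ((2:ℝ) ^ ((J:ℝ)/(2*θ)))^2 = (2:ℝ) ^ ((J:ℝ)/θ) := by
    rw [← Real.rpow_natCast ((2:ℝ) ^ ((J:ℝ)/(2*θ))) 2, ← Real.rpow_mul (by norm_num)]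
    congr 1
    field_simp
    ring
  have hexp : (2:ℝ) ^ ((J:ℝ)/(2*θ)) < Real.sqrt j + 1 := by
    apply lt_of_pow_lt_pow_left₀ 2 (by positivity)
    rw [hsq]
    have hjj : Real.sqrt j ^ 2 = (j:ℝ) := Real.sq_sqrt (Nat.cast_nonneg j)
    nlinarith
  have hlow : (Real.log 2 / (2*θ))^2/4 * (J:ℝ)^2 ≤ (2:ℝ) ^ ((J:ℝ)/(2*θ)) := by
    rw [Real.rpow_def_of_pos (by norm_num)]
    have h := aux_sq_div_four_le_exp ((J:ℝ)/(2*θ) * Real.log 2) (by positivity)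
    calc (Real.log 2 / (2*θ))^2/4 * (J:ℝ)^2 = ((J:ℝ)/(2*θ) * Real.log 2)^2/4 := by
          field_simp
      _ ≤ _ := by rw [mul_comm ((J:ℝ)/(2*θ))] at h ⊢; exact h
  linarith

/-- the array `β_{j,0} = 2^{−√j}`, `β_{j,k} = 0` for `k ≠ 0`, is
square-summable and satisfies the condition `A^α_θ`. -/
theorem stmt_9 (α θ : ℝ) (hα : 0 < α) (hθ : 2 < θ)
    (β : ℕ → ℕ → ℝ)
    (hβdef : ∀ j k : ℕ, β j k = if k = 0 then (2 : ℝ) ^ (-Real.sqrt j) else 0) :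
    SqSummable β ∧ CondA β α θ := by
  have hsum_eq : ∀ j : ℕ, ∑ k ∈ Finset.range (2 ^ j), (β j k) ^ 2
      = ((2:ℝ)^(-Real.sqrt j))^2 := by
    intro j
    rw [Finset.sum_eq_single_of_mem 0
      (Finset.mem_range.mpr (Nat.two_pow_pos j))]
    · rw [hβdef j 0, if_pos rfl]
    · intro k _ hk0
      rw [hβdef j k, if_neg hk0]; ring
  have hle1 : ∀ j : ℕ, (2:ℝ)^(-Real.sqrt j) ≤ 1 :=
    fun j => Real.rpow_le_one_of_one_le_of_nonpos one_le_two
      (neg_nonpos.mpr (Real.sqrt_nonneg _))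
  have hpos : ∀ j : ℕ, (0:ℝ) < (2:ℝ)^(-Real.sqrt j) :=
    fun j => Real.rpow_pos_of_pos (by norm_num) _
  constructor
  · -- square summable
    unfold SqSummable
    rw [show (fun j : ℕ => ∑ k ∈ Finset.range (2 ^ j), (β j k) ^ 2)
      = fun j : ℕ => ((2:ℝ)^(-Real.sqrt j))^2 from funext hsum_eq]
    apply Summable.of_nonneg_of_le (fun j => sq_nonneg _) _ aux_summable_base
    intro j
    nlinarith [hle1 j, hpos j]
  · -- condition A
    set c : ℝ := (Real.log 2 / (2*θ))^2/4 with hc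
    have hθ0 : (0:ℝ) < θ := by linarith
    have hl2 : (0:ℝ) < Real.log 2 := Real.log_pos one_lt_two
    have hc0 : 0 < c := by
      rw [hc]; positivity
    set S : ℝ := ∑' j : ℕ, (2:ℝ)^(-Real.sqrt j) with hS
    have hS0 : 0 ≤ S := tsum_nonneg (fun j => le_of_lt (hpos j))
    refine ⟨(2:ℝ) ^ (α^2/c + 1) * S, fun J => ?_⟩
    -- termwise bound
    have hterm : ∀ j : ℕ, (if J ≤ j then tTail β θ J j else 0)
        ≤ (2:ℝ)^(1 - c*(J:ℝ)^2) * (2:ℝ)^(-Real.sqrt j) := by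
      intro j
      by_cases hJj : J ≤ j
      · rw [if_pos hJj]
        rcases Nat.eq_zero_or_pos (NJj θ J j) with h0 | h1
        · rw [aux_tTail_of_zero hβdef J j h0]
          have hE := aux_lemE hθ J j hJj h0
          have hle : (2:ℝ)^(-Real.sqrt j) ≤ (2:ℝ)^(1 - c*(J:ℝ)^2) := by
            apply Real.rpow_le_rpow_of_exponent_le one_le_two
            simp only [hc]
            linarith
          rw [sq]
          exact mul_le_mul_of_nonneg_right hle (le_of_lt (hpos j))
        · rw [aux_tTail_of_pos hβdef J j h1]
          positivity
      · rw [if_neg hJj]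
        positivity
    have hterm0 : ∀ j : ℕ, 0 ≤ (if J ≤ j then tTail β θ J j else 0) := by
      intro j
      by_cases hJj : J ≤ j
      · rw [if_pos hJj]
        rcases Nat.eq_zero_or_pos (NJj θ J j) with h0 | h1
        · rw [aux_tTail_of_zero hβdef J j h0]; positivity
        · rw [aux_tTail_of_pos hβdef J j h1]
      · rw [if_neg hJj]
    have hsummb : Summable (fun j : ℕ => (2:ℝ)^(1 - c*(J:ℝ)^2) * (2:ℝ)^(-Real.sqrt j)) :=
      aux_summable_base.mul_left _
    have hsummt : Summable (fun j : ℕ => (if J ≤ j then tTail β θ J j else 0)) :=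
      Summable.of_nonneg_of_le hterm0 hterm hsummb
    have htsum_le : ∑' j : ℕ, (if J ≤ j then tTail β θ J j else 0)
        ≤ (2:ℝ)^(1 - c*(J:ℝ)^2) * S := by
      rw [hS, ← tsum_mul_left]
      exact Summable.tsum_le_tsum hterm hsummt hsummb
    calc (2 : ℝ) ^ (2 * (J : ℝ) * α) * ∑' j : ℕ, (if J ≤ j then tTail β θ J j else 0)
        ≤ (2 : ℝ) ^ (2 * (J : ℝ) * α) * ((2:ℝ)^(1 - c*(J:ℝ)^2) * S) :=
          mul_le_mul_of_nonneg_left htsum_le (by positivity)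
      _ = (2:ℝ) ^ (2 * (J : ℝ) * α + (1 - c*(J:ℝ)^2)) * S := by
          rw [← mul_assoc, ← Real.rpow_add (by norm_num)]
      _ ≤ (2:ℝ) ^ (α^2/c + 1) * S := by
          apply mul_le_mul_of_nonneg_right _ hS0
          apply Real.rpow_le_rpow_of_exponent_le one_le_two
          have hd : α^2/c*c = α^2 := div_mul_cancel₀ _ (ne_of_gt hc0)
          nlinarith [sq_nonneg (c*(J:ℝ) - α), hc0]
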